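/- Let p be a prime, l ≥ 1, and q a positive integer with gcd(q, p) = 1. For each residue r with 0 < r < p, the map C_r : {0, ..., p^l − 1} → {0, ..., p^l − 1} defined by C_r(x') = ⌊(p·x' + r)^q / p⌋ mod p^l is a bijection. -/

import Mathlib

lemma pow_cancel_aux (p : ℕ) (hp : p.Prime) (q m : ℕ) (hq0 : 0 < q)
    (hpq : ¬ (p : ℤ) ∣ (q : ℤ)) (x y : ℤ) (hxy : (p : ℤ) ∣ x - y)
    (hx : ¬ (p : ℤ) ∣ x) (h : ((p : ℤ))^m ∣ x^q - y^q) :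
    ((p : ℤ))^m ∣ x - y := by
  set T : ℤ := ∑ i ∈ Finset.range q, x ^ i * y ^ (q - 1 - i) with hT
  have hfac : T * (x - y) = x ^ q - y ^ q := geom_sum₂_mul x y q
  have hpT : ¬ (p : ℤ) ∣ T := by
    intro hd
    have hc : ((T : ℤ) : ZMod p) = 0 := (ZMod.intCast_zmod_eq_zero_iff_dvd T p).mpr hd
    have hxyz : ((x : ℤ) : ZMod p) = ((y : ℤ) : ZMod p) := by
      have := (ZMod.intCast_zmod_eq_zero_iff_dvd (x - y) p).mpr hxy
      push_cast at this
      linear_combination this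
    have hxz : ((x : ℤ) : ZMod p) ≠ 0 := fun h0 =>
      hx ((ZMod.intCast_zmod_eq_zero_iff_dvd x p).mp h0)
    rw [hT] at hc
    push_cast at hc
    rw [show (∑ i ∈ Finset.range q, ((x : ZMod p)) ^ i * ((y : ZMod p)) ^ (q - 1 - i))
        = ∑ i ∈ Finset.range q, ((x : ZMod p)) ^ (q - 1) from ?_] at hc
    · haveI : Fact p.Prime := ⟨hp⟩
      rw [Finset.sum_const, Finset.card_range, nsmul_eq_mul] at hc
      have hq' : (q : ZMod p) ≠ 0 := by
        intro h0
        exact hpq (Int.natCast_dvd_natCast.mpr ((ZMod.natCast_eq_zero_iff q p).mp h0))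
      rcases mul_eq_zero.mp hc with h1 | h1
      · exact hq' h1
      · rcases Nat.eq_zero_or_pos (q - 1) with h2 | h2
        · rw [h2, pow_zero] at h1
          exact one_ne_zero h1
        · exact hxz ((pow_eq_zero_iff (Nat.pos_iff_ne_zero.mp h2)).mp h1)
    · apply Finset.sum_congr rfl
      intro i hi
      rw [Finset.mem_range] at hi
      rw [← hxyz, ← pow_add]
      congr 1
      omega
  have hprime : Prime ((p : ℤ)) := Nat.prime_iff_prime_int.mp hp
  have hcop : IsCoprime ((p : ℤ)^m) T := (hprime.coprime_iff_not_dvd.mpr hpT).pow_left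
  have hd : ((p : ℤ))^m ∣ T * (x - y) := by rw [hfac]; exact h
  exact hcop.dvd_of_dvd_mul_left hd

theorem power_coding_coprime (p : ℕ) (hp : p.Prime) (l : ℕ) (hl : 1 ≤ l)
    (q : ℕ) (hq0 : 0 < q) (hq : Nat.Coprime q p)
    (r : ℕ) (hr0 : 0 < r) (hrp : r < p) :
    Set.BijOn (fun x' : ℕ => ((p * x' + r) ^ q / p) % p ^ l)
      (Set.Iio (p ^ l)) (Set.Iio (p ^ l)) := by
  have hp1 : 1 < p := hp.one_lt
  have hpl : 0 < p ^ l := Nat.pow_pos (by omega)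
  have hmap : Set.MapsTo (fun x' : ℕ => ((p * x' + r) ^ q / p) % p ^ l)
      (Set.Iio (p ^ l)) (Set.Iio (p ^ l)) := fun x _ => Nat.mod_lt _ hpl
  refine ((Set.finite_Iio _).injOn_iff_bijOn_of_mapsTo hmap).mp ?_
  intro x' hx' y' hy' h
  simp only [Set.mem_Iio] at hx' hy'
  simp only at h
  set x : ℕ := p * x' + r with hxdef
  set y : ℕ := p * y' + r with hydef
  have hpdvdq : ¬ (p : ℤ) ∣ (q : ℤ) := by
    intro hd
    have hd' : p ∣ q := Int.natCast_dvd_natCast.mp hd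
    have := Nat.Coprime.eq_one_of_dvd hq.symm hd'
    omega
  have hxmod : x % p = r := by rw [hxdef, Nat.mul_add_mod, Nat.mod_eq_of_lt hrp]
  have hymod : y % p = r := by rw [hydef, Nat.mul_add_mod, Nat.mod_eq_of_lt hrp]
  have hpowmod : x ^ q % p = y ^ q % p := by
    rw [Nat.pow_mod, Nat.pow_mod y, hxmod, hymod]
  have hdvd1 : ((p : ℤ))^(l+1) ∣ (x : ℤ)^q - (y : ℤ)^q := by
    have hdiv : ((p : ℤ))^l ∣ ((x ^ q / p : ℕ) : ℤ) - ((y ^ q / p : ℕ) : ℤ) := by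
      have hmm : (x ^ q / p) ≡ (y ^ q / p) [MOD p ^ l] := h
      have hd2 := hmm.dvd
      rw [dvd_sub_comm] at hd2
      rw [Nat.cast_pow] at hd2
      exact hd2
    have hx1 : ((p : ℤ)) * ((x ^ q / p : ℕ) : ℤ) + ((x ^ q % p : ℕ) : ℤ) = (x : ℤ)^q := by
      exact_mod_cast Nat.div_add_mod (x ^ q) p
    have hy1 : ((p : ℤ)) * ((y ^ q / p : ℕ) : ℤ) + ((y ^ q % p : ℕ) : ℤ) = (y : ℤ)^q := by
      exact_mod_cast Nat.div_add_mod (y ^ q) p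
    have hm : ((x ^ q % p : ℕ) : ℤ) = ((y ^ q % p : ℕ) : ℤ) := by exact_mod_cast hpowmod
    have e : (x : ℤ)^q - (y : ℤ)^q
        = (((x ^ q / p : ℕ) : ℤ) - ((y ^ q / p : ℕ) : ℤ)) * p := by
      rw [← hx1, ← hy1, hm]; ring
    rw [e, pow_succ]
    exact mul_dvd_mul hdiv dvd_rfl
  have hxyp : (p : ℤ) ∣ (x : ℤ) - (y : ℤ) := by
    have e : (x : ℤ) - (y : ℤ) = p * ((x' : ℤ) - (y' : ℤ)) := by
      rw [hxdef, hydef]; push_cast; ring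
    rw [e]; exact Dvd.intro _ rfl
  have hpx : ¬ (p : ℤ) ∣ (x : ℤ) := by
    intro hd
    have hd' : p ∣ x := Int.natCast_dvd_natCast.mp hd
    have : p ∣ r := hxmod ▸ (Nat.dvd_mod_iff dvd_rfl).mpr hd'
    have := Nat.eq_zero_of_dvd_of_lt this hrp
    omega
  have key := pow_cancel_aux p hp q (l+1) hq0 hpdvdq (x : ℤ) (y : ℤ) hxyp hpx hdvd1
  have hxlt : x < p ^ (l + 1) :=
    calc x < p * (x' + 1) := by rw [hxdef, Nat.mul_add, Nat.mul_one]; omega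
      _ ≤ p * p ^ l := Nat.mul_le_mul le_rfl hx'
      _ = p ^ (l + 1) := by rw [pow_succ, mul_comm]
  have hylt : y < p ^ (l + 1) :=
    calc y < p * (y' + 1) := by rw [hydef, Nat.mul_add, Nat.mul_one]; omega
      _ ≤ p * p ^ l := Nat.mul_le_mul le_rfl hy'
      _ = p ^ (l + 1) := by rw [pow_succ, mul_comm]
  have h0 : (x : ℤ) - (y : ℤ) = 0 := by
    refine Int.eq_zero_of_abs_lt_dvd key ?_
    have hxz : (x : ℤ) < ((p : ℤ))^(l+1) := by exact_mod_cast hxlt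
    have hyz : (y : ℤ) < ((p : ℤ))^(l+1) := by exact_mod_cast hylt
    have hx0 : (0 : ℤ) ≤ (x : ℤ) := Int.natCast_nonneg x
    have hy0 : (0 : ℤ) ≤ (y : ℤ) := Int.natCast_nonneg y
    rw [abs_sub_lt_iff]
    constructor <;> linarith
  have hxy : x = y := by
    have : (x : ℤ) = (y : ℤ) := by linarith
    exact_mod_cast this
  rw [hxdef, hydef] at hxy
  have : p * x' = p * y' := by omega
  exact Nat.eq_of_mul_eq_mul_left (by omega) this
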